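/- Let M be a bounded non-negative self-adjoint operator in a Hilbert space G and B a self-adjoint operator in G, bounded from above, with ran M^{1/2} ⊂ dom B. If ‖B₊ M‖ < 1, where B₊ is the positive part of B, then 1 ∈ ρ(M^{1/2} B M^{1/2}), i.e. I − M^{1/2} B M^{1/2} is boundedly invertible. -/

import Mathlib

open scoped InnerProductSpace

open scoped ENNReal in
lemma specRad_mul_comm' {A : Type*} [Ring A] [Algebra ℂ A] (a b : A) :
    spectralRadius ℂ (a * b) = spectralRadius ℂ (b * a) := by
  have key : ∀ s : Set ℂ, (⨆ k ∈ s, (‖k‖₊ : ℝ≥0∞)) = ⨆ k ∈ s \ {0}, (‖k‖₊ : ℝ≥0∞) := by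
    intro s
    apply le_antisymm
    · refine iSup₂_le fun k hk => ?_
      by_cases h : k = 0
      · simp [h]
      · exact le_iSup₂ (f := fun k (_ : k ∈ s \ {0}) => (‖k‖₊ : ℝ≥0∞)) k ⟨hk, h⟩
    · exact iSup₂_le fun k hk =>
        le_iSup₂ (f := fun k (_ : k ∈ s) => (‖k‖₊ : ℝ≥0∞)) k hk.1
  rw [spectralRadius, spectralRadius, key (spectrum ℂ (a * b)), key (spectrum ℂ (b * a)),
    spectrum.nonzero_mul_comm]

/-- Let `M ≥ 0` be bounded self-adjoint with non-negative square root
`R = M^{1/2}`, and let `B = B₊ − B₋` be self-adjoint, bounded from above (so that the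
positive part `B₊` is bounded), with `ran M^{1/2} ⊆ dom B`.  If `‖B₊ M‖ < 1` then
`1 ∈ ρ(M^{1/2} B M^{1/2})`. -/
theorem stmt4
    {G : Type*} [NormedAddCommGroup G] [InnerProductSpace ℂ G] [CompleteSpace G]
    (M R : G →L[ℂ] G)
    (hM : IsSelfAdjoint M) (hMnn : ∀ x : G, 0 ≤ (⟪M x, x⟫_ℂ).re)
    (hR : IsSelfAdjoint R) (hRnn : ∀ x : G, 0 ≤ (⟪R x, x⟫_ℂ).re)
    (hRR : R ∘L R = M)
    -- B self-adjoint, bounded from above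
    (B : G →ₗ.[ℂ] G) (hBsa : IsSelfAdjoint B)
    (hBub : ∃ c : ℝ, ∀ φ : B.domain, (⟪B φ, (φ : G)⟫_ℂ).re ≤ c * ‖(φ : G)‖ ^ 2)
    -- B = B₊ − B₋ via the spectral measure: B₊ bounded non-negative, B₋ ≥ 0
    (Bp : G →L[ℂ] G) (hBp_sa : IsSelfAdjoint Bp) (hBp_nn : ∀ x : G, 0 ≤ (⟪Bp x, x⟫_ℂ).re)
    (Bm : G →ₗ.[ℂ] G) (hBm_dom : Bm.domain = B.domain)
    (hBm_nn : ∀ φ : Bm.domain, 0 ≤ (⟪Bm φ, (φ : G)⟫_ℂ).re)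
    (hdecomp : ∀ x : G, ∀ (hxB : x ∈ B.domain) (hxBm : x ∈ Bm.domain),
      B ⟨x, hxB⟩ = Bp x - Bm ⟨x, hxBm⟩)
    -- ran M^{1/2} ⊆ dom B
    (hranR : ∀ x : G, R x ∈ B.domain)
    -- BR is the bounded everywhere defined operator B M^{1/2}
    (BR : G →L[ℂ] G) (hBR : ∀ x : G, BR x = B ⟨R x, hranR x⟩)
    -- ‖B₊ M‖ < 1
    (hnorm : ‖Bp ∘L M‖ < 1) :
    (1 : ℂ) ∉ spectrum ℂ (R ∘L BR) := by
  classical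
  rcases subsingleton_or_nontrivial G with hG | hG
  · rw [spectrum.notMem_iff]
    exact isUnit_of_subsingleton _
  set T : G →L[ℂ] G := R ∘L BR with hT
  set A : G →L[ℂ] G := R ∘L (Bp ∘L R) with hA
  have hRsym : (R : G →ₗ[ℂ] G).IsSymmetric :=
    ContinuousLinearMap.isSelfAdjoint_iff_isSymmetric.mp hR
  -- A is self-adjoint
  have hAsa : IsSelfAdjoint A := by
    have : A = R * (Bp * R) := rfl
    rw [this]
    have h1 : star (R * (Bp * R)) = (star (Bp * R)) * star R := star_mul _ _
    rw [IsSelfAdjoint, h1, star_mul, hR.star_eq, hBp_sa.star_eq, mul_assoc]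
  -- spectral radius bound : ‖A‖₊ ≤ ‖Bp ∘L M‖₊
  have hAnorm : ‖A‖ ≤ ‖Bp ∘L M‖ := by
    have h1 : (‖A‖₊ : ENNReal) = spectralRadius ℂ A := (hAsa.spectralRadius_eq_nnnorm).symm
    have h2 : spectralRadius ℂ A = spectralRadius ℂ ((Bp * R) * R) := by
      have : A = R * (Bp * R) := rfl
      rw [this, specRad_mul_comm']
    have h3 : (Bp * R) * R = Bp ∘L M := by
      rw [← hRR]
      rfl
    have h4 : spectralRadius ℂ (Bp ∘L M) ≤ (‖Bp ∘L M‖₊ : ENNReal) :=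
      spectrum.spectralRadius_le_nnnorm _
    have : (‖A‖₊ : ENNReal) ≤ (‖Bp ∘L M‖₊ : ENNReal) := by
      rw [h1, h2, h3]; exact h4
    exact_mod_cast this
  -- quadratic form bound for T
  have hTbound : ∀ x : G, (⟪T x, x⟫_ℂ).re ≤ ‖Bp ∘L M‖ * ‖x‖ ^ 2 := by
    intro x
    have hmem : R x ∈ Bm.domain := hBm_dom ▸ hranR x
    have hd := hdecomp (R x) (hranR x) hmem
    have e1 : ⟪T x, x⟫_ℂ = ⟪BR x, R x⟫_ℂ := hRsym (BR x) x
    have e2 : ⟪A x, x⟫_ℂ = ⟪Bp (R x), R x⟫_ℂ := hRsym (Bp (R x)) x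
    have e3 : (⟪T x, x⟫_ℂ).re = (⟪Bp (R x), R x⟫_ℂ).re - (⟪Bm ⟨R x, hmem⟩, R x⟫_ℂ).re := by
      rw [e1, hBR x, hd]
      simp [inner_sub_left]
    have e4 : (⟪T x, x⟫_ℂ).re ≤ (⟪A x, x⟫_ℂ).re := by
      rw [e3, e2]
      have := hBm_nn ⟨R x, hmem⟩
      linarith
    refine e4.trans ?_
    have e5 : (⟪A x, x⟫_ℂ).re ≤ ‖⟪A x, x⟫_ℂ‖ :=
      (le_abs_self _).trans (Complex.abs_re_le_norm _)
    have e6 : ‖⟪A x, x⟫_ℂ‖ ≤ ‖A x‖ * ‖x‖ := norm_inner_le_norm _ _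
    have e7 : ‖A x‖ * ‖x‖ ≤ (‖A‖ * ‖x‖) * ‖x‖ :=
      mul_le_mul_of_nonneg_right (A.le_opNorm x) (norm_nonneg x)
    have e8 : (‖A‖ * ‖x‖) * ‖x‖ ≤ (‖Bp ∘L M‖ * ‖x‖) * ‖x‖ := by
      have := mul_le_mul_of_nonneg_right hAnorm (norm_nonneg x)
      exact mul_le_mul_of_nonneg_right this (norm_nonneg x)
    nlinarith [e5, e6, e7, e8]
  -- coercivity of 1 - T
  set β := ‖Bp ∘L M‖ with hβ
  have hβ0 : 0 ≤ β := norm_nonneg _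
  have hc : (0 : ℝ) < 1 - β := by linarith
  set c : NNReal := ⟨1 - β, hc.le⟩ with hcdef
  have hcpos : 0 < c := by
    rw [← NNReal.coe_lt_coe]; exact hc
  have key : ∀ x : G, ‖x‖ ^ 2 * (c : ℝ) ≤ ‖⟪((1 : G →L[ℂ] G) - T) x, x⟫_ℂ‖ := by
    intro x
    have e0 : ⟪((1 : G →L[ℂ] G) - T) x, x⟫_ℂ = ⟪x, x⟫_ℂ - ⟪T x, x⟫_ℂ := by
      simp [ContinuousLinearMap.sub_apply, inner_sub_left]
    have e1 : (⟪((1 : G →L[ℂ] G) - T) x, x⟫_ℂ).re = ‖x‖ ^ 2 - (⟪T x, x⟫_ℂ).re := by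
      rw [e0]
      have hxx : (⟪x, x⟫_ℂ).re = ‖x‖ ^ 2 := by
        have := inner_self_eq_norm_sq (𝕜 := ℂ) x
        simpa [RCLike.re_to_complex] using this
      rw [Complex.sub_re, hxx]
    have e2 : ‖x‖ ^ 2 * (c : ℝ) ≤ (⟪((1 : G →L[ℂ] G) - T) x, x⟫_ℂ).re := by
      rw [e1]
      have := hTbound x
      have hcc : (c : ℝ) = 1 - β := rfl
      nlinarith [sq_nonneg ‖x‖]
    exact e2.trans ((le_abs_self _).trans (Complex.abs_re_le_norm _))
  have hunit : IsUnit ((1 : G →L[ℂ] G) - T) :=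
    ContinuousLinearMap.isUnit_of_forall_le_norm_inner_map _ hcpos key
  rw [spectrum.notMem_iff]
  simpa using hunit
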